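/- Let L be the finitary first-order language with one binary function symbol ·. A nonempty L-structure (A, ·) admits an L-embedding (an injective map preserving ·) into a quasigroup (a nonempty structure (B, ·) such that for all a, b ∈ B there is a unique x ∈ B with a·x = b and a unique y ∈ B with y·a = b) iff · on A satisfies both cancellation laws: for all a, b, c ∈ A, a·b = a·c implies b = c, and b·a = c·a implies b = c. -/

import Mathlib

/- STATEMENT 17: A nonempty magma (A, ·) embeds into a quasigroup iff · satisfies both
cancellation laws. -/

universe u

set_option linter.unusedSectionVars false

namespace QGEmbed

open Cardinal Set

attribute [local instance] Classical.propDecidable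

noncomputable section

variable (A : Type u) [Mul A]

/-- The cardinal used for the completion. -/
def kap : Cardinal.{u} := Order.succ (#A + ℵ₀)

/-- Index/extra-element type of cardinality `kap`. -/
abbrev D : Type u := (kap A).ord.ToType

/-- Carrier of the quasigroup completion. -/
abbrev BB : Type u := A ⊕ D A

/-- Partial binary operations (partial Latin squares). -/
abbrev Sq : Type u := BB A → BB A → Option (BB A)

/-- The initial square: the multiplication table of `A`. -/
def blockSq : Sq A := fun x y =>
  match x, y with
  | Sum.inl a, Sum.inl b => some (Sum.inl (a * b))
  | _, _ => none

variable {A}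

lemma aleph0_le_kap : ℵ₀ ≤ kap A := le_trans le_add_self (Order.le_succ _)

lemma mkA_lt_kap : #A < kap A := lt_of_le_of_lt le_self_add (Order.lt_succ _)

lemma kap_ne_zero : kap A ≠ 0 := by
  intro h
  exact (aleph0_ne_zero) (le_antisymm (h ▸ aleph0_le_kap) zero_le)

lemma mkD : #(D A) = kap A := by rw [Cardinal.mk_ord_toType]

instance : Nonempty (D A) :=
  Ordinal.toType_nonempty_iff_ne_zero.2 (by
    intro h
    exact kap_ne_zero (A := A) (by simpa using congrArg Ordinal.card h))

lemma block_some_iff {x y v : BB A} :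
    blockSq A x y = some v ↔ ∃ a b : A, x = Sum.inl a ∧ y = Sum.inl b ∧ v = Sum.inl (a * b) := by
  constructor
  · intro h
    cases x with
    | inl a =>
      cases y with
      | inl b =>
        refine ⟨a, b, rfl, rfl, ?_⟩
        simpa [blockSq] using h.symm
      | inr d => simp [blockSq] at h
    | inr d => simp [blockSq] at h
  · rintro ⟨a, b, rfl, rfl, rfl⟩; rfl

def inBlock (p : BB A × BB A) : Prop :=
  (∃ a : A, p.1 = Sum.inl a) ∧ (∃ b : A, p.2 = Sum.inl b)

def extraSet (P : Sq A) : Set (BB A × BB A) :=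
  {p | (P p.1 p.2).isSome ∧ ¬ inBlock p}

structure Valid (P : Sq A) : Prop where
  base : ∀ a b : A, P (Sum.inl a) (Sum.inl b) = some (Sum.inl (a * b))
  rowInj : ∀ x y y' v, P x y = some v → P x y' = some v → y = y'
  colInj : ∀ x x' y v, P x y = some v → P x' y = some v → x = x'

def Small (P : Sq A) : Prop := #(extraSet P) < kap A

def SqLe (P Q : Sq A) : Prop := ∀ x y v, P x y = some v → Q x y = some v

lemma blockValid (hl : ∀ a b c : A, a * b = a * c → b = c)
    (hr : ∀ a b c : A, b * a = c * a → b = c) : Valid (blockSq A) where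
  base := fun _ _ => rfl
  rowInj := by
    intro x y y' v h1 h2
    obtain ⟨a, b, rfl, rfl, rfl⟩ := block_some_iff.1 h1
    obtain ⟨a', b', ha, rfl, hv⟩ := block_some_iff.1 h2
    obtain rfl : a' = a := by exact Sum.inl_injective ha.symm
    exact congrArg Sum.inl (hl _ _ _ (Sum.inl_injective hv))
  colInj := by
    intro x x' y v h1 h2
    obtain ⟨a, b, rfl, rfl, rfl⟩ := block_some_iff.1 h1
    obtain ⟨a', b', rfl, hb, hv⟩ := block_some_iff.1 h2
    obtain rfl : b' = b := by exact Sum.inl_injective hb.symm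
    exact congrArg Sum.inl (hr _ _ _ (Sum.inl_injective hv))

/-- Fill one cell of a partial square. -/
def fill (P : Sq A) (x y v : BB A) : Sq A := fun x' y' =>
  if x' = x ∧ y' = y then some v else P x' y'

lemma fill_self (P : Sq A) (x y v : BB A) : fill P x y v x y = some v :=
  if_pos ⟨rfl, rfl⟩

lemma fill_other (P : Sq A) {x y x' y' : BB A} (v : BB A) (h : ¬(x' = x ∧ y' = y)) :
    fill P x y v x' y' = P x' y' := if_neg h

lemma fill_le {P : Sq A} {x y : BB A} (v : BB A) (h : P x y = none) :
    SqLe P (fill P x y v) := by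
  intro x' y' w hw
  rw [fill]
  split_ifs with hc
  · exact absurd hw (by rw [hc.1, hc.2, h]; simp)
  · exact hw

lemma fill_valid {P : Sq A} (hP : Valid P) {x y v : BB A}
    (hempty : P x y = none)
    (hrow : ∀ y', P x y' ≠ some v)
    (hcol : ∀ x', P x' y ≠ some v) : Valid (fill P x y v) where
  base := by
    intro a b
    rw [fill]
    split_ifs with hc
    · exact absurd (hP.base a b) (by rw [hc.1, hc.2, hempty]; simp)
    · exact hP.base a b
  rowInj := by
    intro x1 y1 y2 w h1 h2
    rw [fill] at h1 h2
    split_ifs at h1 h2 with c1 c2 c2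
    · rw [c1.2, c2.2]
    · obtain rfl : v = w := by simpa using h1
      exact absurd h2 (c1.1 ▸ hrow y2)
    · obtain rfl : v = w := by simpa using h2
      exact absurd h1 (c2.1 ▸ hrow y1)
    · exact hP.rowInj x1 y1 y2 w h1 h2
  colInj := by
    intro x1 x2 y1 w h1 h2
    rw [fill] at h1 h2
    split_ifs at h1 h2 with c1 c2 c2
    · rw [c1.1, c2.1]
    · obtain rfl : v = w := by simpa using h1
      exact absurd h2 (c1.2 ▸ hcol x2)
    · obtain rfl : v = w := by simpa using h2
      exact absurd h1 (c2.2 ▸ hcol x1)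
    · exact hP.colInj x1 x2 y1 w h1 h2

variable (A) in
/-- Tasks: fill a cell, solve `a * ? = b` (row task), solve `? * a = b` (column task). -/
abbrev TT : Type u := (BB A × BB A) ⊕ ((BB A × BB A) ⊕ (BB A × BB A))

/-- One step of the construction: process one (optional) task. -/
def step (P : Sq A) : Option (TT A) → Sq A
  | none => P
  | some (Sum.inl (x, y)) =>
    if (P x y).isSome then P
    else if h : ∃ v, (∀ y', P x y' ≠ some v) ∧ (∀ x', P x' y ≠ some v) then
      fill P x y h.choose
    else P
  | some (Sum.inr (Sum.inl (a, b))) =>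
    if ∃ y, P a y = some b then P
    else if h : ∃ c, ∀ x, P x c = none then fill P a h.choose b
    else P
  | some (Sum.inr (Sum.inr (a, b))) =>
    if ∃ x, P x a = some b then P
    else if h : ∃ r, ∀ y, P r y = none then fill P h.choose a b
    else P

lemma step_le (P : Sq A) (t : Option (TT A)) : SqLe P (step P t) := by
  match t with
  | none => exact fun x y v h => h
  | some (Sum.inl (x, y)) =>
    rw [step]
    split_ifs with h1 h2
    · exact fun _ _ _ h => h
    · exact fill_le _ (Option.not_isSome_iff_eq_none.1 h1)
    · exact fun _ _ _ h => h
  | some (Sum.inr (Sum.inl (a, b))) =>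
    rw [step]
    split_ifs with h1 h2
    · exact fun _ _ _ h => h
    · exact fill_le _ (h2.choose_spec a)
    · exact fun _ _ _ h => h
  | some (Sum.inr (Sum.inr (a, b))) =>
    rw [step]
    split_ifs with h1 h2
    · exact fun _ _ _ h => h
    · exact fill_le _ (h2.choose_spec a)
    · exact fun _ _ _ h => h

lemma step_new (P : Sq A) (t : Option (TT A)) :
    ∃ p : BB A × BB A, ∀ x y, (x, y) ≠ p → step P t x y = P x y := by
  have hne : Nonempty (BB A) := ⟨Sum.inr (Classical.arbitrary (D A))⟩
  obtain ⟨z⟩ := hne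
  match t with
  | none => exact ⟨(z, z), fun _ _ _ => rfl⟩
  | some (Sum.inl (x, y)) =>
    rw [step]
    split_ifs with h1 h2
    · exact ⟨(z, z), fun _ _ _ => rfl⟩
    · exact ⟨(x, y), fun x' y' h => fill_other _ _ (fun hc => h (by rw [hc.1, hc.2]))⟩
    · exact ⟨(z, z), fun _ _ _ => rfl⟩
  | some (Sum.inr (Sum.inl (a, b))) =>
    rw [step]
    split_ifs with h1 h2
    · exact ⟨(z, z), fun _ _ _ => rfl⟩
    · exact ⟨(a, h2.choose), fun x' y' h => fill_other _ _ (fun hc => h (by rw [hc.1, hc.2]))⟩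
    · exact ⟨(z, z), fun _ _ _ => rfl⟩
  | some (Sum.inr (Sum.inr (a, b))) =>
    rw [step]
    split_ifs with h1 h2
    · exact ⟨(z, z), fun _ _ _ => rfl⟩
    · exact ⟨(h2.choose, a), fun x' y' h => fill_other _ _ (fun hc => h (by rw [hc.1, hc.2]))⟩
    · exact ⟨(z, z), fun _ _ _ => rfl⟩

lemma step_valid {P : Sq A} (hP : Valid P) (t : Option (TT A)) : Valid (step P t) := by
  match t with
  | none => exact hP
  | some (Sum.inl (x, y)) =>
    rw [step]
    split_ifs with h1 h2
    · exact hP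
    · exact fill_valid hP (Option.not_isSome_iff_eq_none.1 h1) h2.choose_spec.1 h2.choose_spec.2
    · exact hP
  | some (Sum.inr (Sum.inl (a, b))) =>
    rw [step]
    split_ifs with h1 h2
    · exact hP
    · refine fill_valid hP (h2.choose_spec a) (fun y' hy => h1 ⟨y', hy⟩) ?_
      intro x hx
      rw [h2.choose_spec x] at hx
      exact absurd hx (by simp)
    · exact hP
  | some (Sum.inr (Sum.inr (a, b))) =>
    rw [step]
    split_ifs with h1 h2
    · exact hP
    · refine fill_valid hP (h2.choose_spec a) ?_ (fun x' hx => h1 ⟨x', hx⟩)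
      intro y hy
      rw [h2.choose_spec y] at hy
      exact absurd hy (by simp)
    · exact hP

/-- A set of elements of size `< kap` misses some element of `D`. -/
lemma fresh_inr {S : Set (BB A)} (hS : #S < kap A) : ∃ d : D A, Sum.inr d ∉ S := by
  by_contra h
  push_neg at h
  have : #(D A) ≤ #S :=
    mk_le_of_injective (f := fun d => (⟨Sum.inr d, h d⟩ : S))
      (fun d d' hdd => by simpa using hdd)
  rw [mkD] at this
  exact absurd (this.trans_lt hS) (lt_irrefl _)

lemma fresh_D {S : Set (D A)} (hS : #S < kap A) : ∃ d : D A, d ∉ S := by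
  by_contra h
  push_neg at h
  have : #(D A) ≤ #S :=
    mk_le_of_injective (f := fun d => (⟨d, h d⟩ : S)) (fun d d' hdd => by simpa using hdd)
  rw [mkD] at this
  exact absurd (this.trans_lt hS) (lt_irrefl _)

lemma mk_filledRow_le (P : Sq A) (x : BB A) :
    #{y : BB A | (P x y).isSome} ≤ #A + #(extraSet P) := by
  have := mk_le_of_injective (f := fun y : {y : BB A | (P x y).isSome} =>
    (match y with
      | ⟨Sum.inl b, _⟩ => Sum.inl b
      | ⟨Sum.inr d, hy⟩ => Sum.inr ⟨(x, Sum.inr d), hy, fun hB => by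
          obtain ⟨b, hb⟩ := hB.2
          exact absurd hb (by simp)⟩ : A ⊕ extraSet P)) ?_
  · calc #{y : BB A | (P x y).isSome} ≤ #(A ⊕ extraSet P) := this
      _ = #A + #(extraSet P) := by rw [mk_sum, lift_id, lift_id]
  · rintro ⟨y, hy⟩ ⟨y', hy'⟩ h
    cases y with
    | inl b =>
      cases y' with
      | inl b' => simpa using h
      | inr d' => exact absurd h (by simp)
    | inr d =>
      cases y' with
      | inl b' => exact absurd h (by simp)
      | inr d' =>
        simp only [Sum.inr.injEq, Subtype.mk.injEq, Prod.mk.injEq] at h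
        replace h := congrArg Subtype.val h
        simp only [Prod.mk.injEq] at h
        simp [h.2]

lemma mk_filledCol_le (P : Sq A) (y : BB A) :
    #{x : BB A | (P x y).isSome} ≤ #A + #(extraSet P) := by
  have := mk_le_of_injective (f := fun x : {x : BB A | (P x y).isSome} =>
    (match x with
      | ⟨Sum.inl a, _⟩ => Sum.inl a
      | ⟨Sum.inr d, hx⟩ => Sum.inr ⟨(Sum.inr d, y), hx, fun hB => by
          obtain ⟨b, hb⟩ := hB.1
          exact absurd hb (by simp)⟩ : A ⊕ extraSet P)) ?_
  · calc #{x : BB A | (P x y).isSome} ≤ #(A ⊕ extraSet P) := this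
      _ = #A + #(extraSet P) := by rw [mk_sum, lift_id, lift_id]
  · rintro ⟨x, hx⟩ ⟨x', hx'⟩ h
    cases x with
    | inl a =>
      cases x' with
      | inl a' => simpa using h
      | inr d' => exact absurd h (by simp)
    | inr d =>
      cases x' with
      | inl a' => exact absurd h (by simp)
      | inr d' =>
        simp only [Sum.inr.injEq, Subtype.mk.injEq, Prod.mk.injEq] at h
        replace h := congrArg Subtype.val h
        simp only [Prod.mk.injEq] at h
        simp [h.1]

lemma mk_rowVals_le (P : Sq A) (x : BB A) :
    #{v : BB A | ∃ y, P x y = some v} ≤ #A + #(extraSet P) := by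
  refine le_trans ?_ (mk_filledRow_le P x)
  refine mk_le_of_injective (f := fun v : {v : BB A | ∃ y, P x y = some v} =>
    (⟨v.2.choose, by simp only [Set.mem_setOf_eq, v.2.choose_spec, Option.isSome_some]⟩ :
      {y : BB A | (P x y).isSome})) ?_
  rintro ⟨v, hv⟩ ⟨w, hw⟩ h
  simp only [Subtype.mk.injEq] at h
  have h1 := hv.choose_spec
  have h2 := hw.choose_spec
  rw [h] at h1
  rw [h1] at h2
  simpa using h2

lemma mk_colVals_le (P : Sq A) (y : BB A) :
    #{v : BB A | ∃ x, P x y = some v} ≤ #A + #(extraSet P) := by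
  refine le_trans ?_ (mk_filledCol_le P y)
  refine mk_le_of_injective (f := fun v : {v : BB A | ∃ x, P x y = some v} =>
    (⟨v.2.choose, by simp only [Set.mem_setOf_eq, v.2.choose_spec, Option.isSome_some]⟩ :
      {x : BB A | (P x y).isSome})) ?_
  rintro ⟨v, hv⟩ ⟨w, hw⟩ h
  simp only [Subtype.mk.injEq] at h
  have h1 := hv.choose_spec
  have h2 := hw.choose_spec
  rw [h] at h1
  rw [h1] at h2
  simpa using h2

/-- In a small square, any given cell admits a value fresh for its row and column. -/
lemma exists_fresh_value {P : Sq A} (hS : Small P) (x y : BB A) :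
    ∃ v, (∀ y', P x y' ≠ some v) ∧ (∀ x', P x' y ≠ some v) := by
  have hrow := mk_rowVals_le P x
  have hcol := mk_colVals_le P y
  have hA : #A + #(extraSet P) < kap A :=
    Cardinal.add_lt_of_lt aleph0_le_kap mkA_lt_kap hS
  have hbad : #({v : BB A | ∃ y', P x y' = some v} ∪ {v : BB A | ∃ x', P x' y = some v}
      : Set (BB A)) < kap A := by
    refine lt_of_le_of_lt (mk_union_le _ _) ?_
    exact Cardinal.add_lt_of_lt aleph0_le_kap (hrow.trans_lt hA) (hcol.trans_lt hA)
  obtain ⟨d, hd⟩ := fresh_inr hbad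
  refine ⟨Sum.inr d, fun y' hy => hd (Or.inl ⟨y', hy⟩), fun x' hx => hd (Or.inr ⟨x', hx⟩)⟩

/-- In a small square, some column is entirely empty. -/
lemma exists_empty_col {P : Sq A} (hS : Small P) : ∃ c : BB A, ∀ x, P x c = none := by
  have : #{d : D A | ∃ x, (P x (Sum.inr d)).isSome} < kap A := by
    refine lt_of_le_of_lt ?_ hS
    refine mk_le_of_injective (f := fun d : {d : D A | ∃ x, (P x (Sum.inr d)).isSome} =>
      (⟨(d.2.choose, Sum.inr d.1), d.2.choose_spec, fun hB => by
        obtain ⟨b, hb⟩ := hB.2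
        exact absurd hb (by simp)⟩ : extraSet P)) ?_
    rintro ⟨d, hd⟩ ⟨d', hd'⟩ h
    replace h := congrArg Subtype.val h
    simp only [Subtype.mk.injEq, Prod.mk.injEq, Sum.inr.injEq] at h
    simp [h.2]
  obtain ⟨d, hd⟩ := fresh_D this
  refine ⟨Sum.inr d, fun x => ?_⟩
  rw [← Option.not_isSome_iff_eq_none]
  exact fun hx => hd ⟨x, hx⟩

/-- In a small square, some row is entirely empty. -/
lemma exists_empty_row {P : Sq A} (hS : Small P) : ∃ r : BB A, ∀ y, P r y = none := by
  have : #{d : D A | ∃ y, (P (Sum.inr d) y).isSome} < kap A := by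
    refine lt_of_le_of_lt ?_ hS
    refine mk_le_of_injective (f := fun d : {d : D A | ∃ y, (P (Sum.inr d) y).isSome} =>
      (⟨(Sum.inr d.1, d.2.choose), d.2.choose_spec, fun hB => by
        obtain ⟨b, hb⟩ := hB.1
        exact absurd hb (by simp)⟩ : extraSet P)) ?_
    rintro ⟨d, hd⟩ ⟨d', hd'⟩ h
    replace h := congrArg Subtype.val h
    simp only [Subtype.mk.injEq, Prod.mk.injEq, Sum.inr.injEq] at h
    simp [h.1]
  obtain ⟨d, hd⟩ := fresh_D this
  refine ⟨Sum.inr d, fun y => ?_⟩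
  rw [← Option.not_isSome_iff_eq_none]
  exact fun hy => hd ⟨y, hy⟩

lemma mk_BB : #(BB A) = kap A := by
  simp only [mk_sum, lift_id, mkD]
  rw [Cardinal.add_eq_right aleph0_le_kap mkA_lt_kap.le]

lemma mk_TT_le : #(TT A) ≤ #(D A) := by
  have hBB : #(BB A × BB A) = kap A := by
    simp only [mk_prod, lift_id, mk_BB]
    exact Cardinal.mul_eq_self aleph0_le_kap
  simp only [mkD, mk_sum, lift_id, hBB, Cardinal.add_eq_self aleph0_le_kap, le_refl]

variable (A) in
/-- An injection enumerating all tasks by stages. -/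
def tEmb : TT A ↪ D A := Classical.choice (Cardinal.le_def _ _ |>.1 mk_TT_le)

variable (A) in
def task : D A → Option (TT A) := fun α => if h : ∃ t, tEmb A t = α then some h.choose else none

lemma task_emb (t : TT A) : task A (tEmb A t) = some t := by
  rw [task, dif_pos ⟨t, rfl⟩]
  exact congrArg some ((tEmb A).injective (⟨t, rfl⟩ : ∃ t', tEmb A t' = tEmb A t).choose_spec)

/-- Union of all previous squares, together with the base block. -/
def supo (α : D A) (IH : ∀ β : D A, β < α → Sq A) : Sq A := fun x y =>
  if h : ∃ p : {β : D A // β < α}, (IH p.1 p.2 x y).isSome then IH h.choose.1 h.choose.2 x y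
  else blockSq A x y

variable (A) in
/-- The transfinite sequence of partial squares. -/
def F : D A → Sq A :=
  WellFounded.fix wellFounded_lt (fun α IH => step (supo α IH) (task A α))

variable (A) in
def supF (α : D A) : Sq A := supo α (fun β _ => F A β)

lemma F_eq (α : D A) : F A α = step (supF A α) (task A α) := by
  rw [F, WellFounded.fix_eq]
  rfl

lemma supF_cases {α : D A} {x y v : BB A} (h : supF A α x y = some v) :
    (∃ β, ∃ _ : β < α, F A β x y = some v) ∨ blockSq A x y = some v := by
  rw [supF, supo] at h
  split_ifs at h with hc
  · exact Or.inl ⟨hc.choose.1, hc.choose.2, h⟩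
  · exact Or.inr h

/-- The main inductive invariant. -/
def MainProp (α : D A) : Prop :=
  Valid (F A α) ∧ ∀ β, β < α → SqLe (F A β) (F A α)

section Parametric

variable {α : D A} (H : ∀ β, β < α → MainProp β)

include H

lemma compat_of {β γ : D A} {x y v w : BB A} (hβ : β < α) (hγ : γ < α)
    (h1 : F A β x y = some v) (h2 : F A γ x y = some w) : v = w := by
  rcases lt_trichotomy β γ with h | h | h
  · have := (H γ hγ).2 β h x y v h1
    rw [this] at h2
    exact Option.some_injective _ h2
  · subst h
    rw [h1] at h2
    exact Option.some_injective _ h2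
  · have := (H β hβ).2 γ h x y w h2
    rw [this] at h1
    exact (Option.some_injective _ h1).symm

lemma le_supF_of {β : D A} (hβ : β < α) : SqLe (F A β) (supF A α) := by
  intro x y v hv
  have hc : ∃ p : {b : D A // b < α}, (F A p.1 x y).isSome :=
    ⟨⟨β, hβ⟩, by rw [hv]; rfl⟩
  rw [supF, supo, dif_pos hc]
  obtain ⟨w, hw⟩ := Option.isSome_iff_exists.1 hc.choose_spec
  rw [hw]
  exact congrArg some (compat_of H hc.choose.2 hβ hw hv)

lemma block_le_F {Q : Sq A} (hV : Valid Q) : SqLe (blockSq A) Q := by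
  intro x y v hv
  obtain ⟨a, b, rfl, rfl, rfl⟩ := block_some_iff.1 hv
  exact hV.base a b

lemma F_le_of {β δ : D A} (hδ : δ < α) (h : β ≤ δ) : SqLe (F A β) (F A δ) := by
  rcases h.lt_or_eq with h | h
  · exact (H δ hδ).2 β h
  · subst h
    exact fun _ _ _ hv => hv

lemma block_le_supF_of : SqLe (blockSq A) (supF A α) := by
  intro x y v hv
  rw [supF, supo]
  split_ifs with hc
  · obtain ⟨a, b, rfl, rfl, rfl⟩ := block_some_iff.1 hv
    exact (H _ hc.choose.2).1.base a b
  · exact hv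

lemma valid_supF_of (hl : ∀ a b c : A, a * b = a * c → b = c)
    (hr : ∀ a b c : A, b * a = c * a → b = c) : Valid (supF A α) where
  base := fun a b => block_le_supF_of H _ _ _ ((blockValid hl hr).base a b)
  rowInj := by
    intro x y y' v h1 h2
    rcases supF_cases h1 with ⟨β, hβ, hb⟩ | hb <;> rcases supF_cases h2 with ⟨γ, hγ, hg⟩ | hg
    · have hδ : max β γ < α := max_lt hβ hγ
      exact (H _ hδ).1.rowInj _ _ _ _ (F_le_of H hδ (le_max_left _ _) _ _ _ hb)
        (F_le_of H hδ (le_max_right _ _) _ _ _ hg)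
    · exact (H β hβ).1.rowInj _ _ _ _ hb (block_le_F H (H β hβ).1 _ _ _ hg)
    · exact (H γ hγ).1.rowInj _ _ _ _ (block_le_F H (H γ hγ).1 _ _ _ hb) hg
    · exact (blockValid hl hr).rowInj _ _ _ _ hb hg
  colInj := by
    intro x x' y v h1 h2
    rcases supF_cases h1 with ⟨β, hβ, hb⟩ | hb <;> rcases supF_cases h2 with ⟨γ, hγ, hg⟩ | hg
    · have hδ : max β γ < α := max_lt hβ hγ
      exact (H _ hδ).1.colInj _ _ _ _ (F_le_of H hδ (le_max_left _ _) _ _ _ hb)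
        (F_le_of H hδ (le_max_right _ _) _ _ _ hg)
    · exact (H β hβ).1.colInj _ _ _ _ hb (block_le_F H (H β hβ).1 _ _ _ hg)
    · exact (H γ hγ).1.colInj _ _ _ _ (block_le_F H (H γ hγ).1 _ _ _ hb) hg
    · exact (blockValid hl hr).colInj _ _ _ _ hb hg

end Parametric

variable (hl : ∀ a b c : A, a * b = a * c → b = c)
  (hr : ∀ a b c : A, b * a = c * a → b = c)

include hl hr in
lemma main : ∀ α : D A, MainProp α := by
  intro α
  refine wellFounded_lt.induction α ?_
  intro α IH
  constructor
  · rw [F_eq]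
    exact step_valid (valid_supF_of IH hl hr) _
  · intro β hβ x y v hv
    rw [F_eq]
    exact step_le _ _ x y v (le_supF_of IH hβ x y v hv)

include hl hr in
lemma valid_F (α : D A) : Valid (F A α) := (main hl hr α).1

include hl hr in
lemma F_mono {β γ : D A} (h : β ≤ γ) : SqLe (F A β) (F A γ) := by
  rcases h.lt_or_eq with h | h
  · exact (main hl hr γ).2 β h
  · subst h
    exact fun _ _ _ hv => hv

include hl hr in
lemma valid_supF (α : D A) : Valid (supF A α) :=
  valid_supF_of (fun β _ => main hl hr β) hl hr

omit hl hr in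
lemma small_supF (α : D A) : Small (supF A α) := by
  have key : ∀ p : extraSet (supF A α), ∃ β : D A, (F A β (p : BB A × BB A).1 (p : BB A × BB A).2).isSome := by
    rintro ⟨p, hs, hnb⟩
    obtain ⟨v, hv⟩ := Option.isSome_iff_exists.1 hs
    rcases supF_cases hv with ⟨β, hβ, hb⟩ | hb
    · exact ⟨β, by rw [hb]; rfl⟩
    · obtain ⟨a, b, ha, hb', _⟩ := block_some_iff.1 hb
      exact absurd ⟨⟨a, ha⟩, ⟨b, hb'⟩⟩ hnb
  set Sp : extraSet (supF A α) → Set (D A) :=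
    fun p => {β : D A | (F A β (p : BB A × BB A).1 (p : BB A × BB A).2).isSome} with hSp
  have hne : ∀ p, (Sp p).Nonempty := fun p => key p
  set m : extraSet (supF A α) → D A := fun p => wellFounded_lt.min (Sp p) (hne p) with hm
  have hmem : ∀ p, m p ∈ Sp p := fun p => wellFounded_lt.min_mem _ (hne p)
  have hminimal : ∀ p γ, γ ∈ Sp p → ¬ γ < m p := fun p γ hγ => wellFounded_lt.not_lt_min _ hγ
  have hlt : ∀ p, m p < α := by
    rintro ⟨p, hs, hnb⟩
    obtain ⟨v, hv⟩ := Option.isSome_iff_exists.1 hs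
    rcases supF_cases hv with ⟨β, hβ, hb⟩ | hb
    · have : β ∈ Sp ⟨p, hs, hnb⟩ := by rw [hSp]; simp only [Set.mem_setOf_eq, hb]; rfl
      exact lt_of_le_of_lt (not_lt.1 (hminimal _ β this)) hβ
    · obtain ⟨a, b, ha, hb', _⟩ := block_some_iff.1 hb
      exact absurd ⟨⟨a, ha⟩, ⟨b, hb'⟩⟩ hnb
  have hnone : ∀ p : extraSet (supF A α),
      supF A (m p) (p : BB A × BB A).1 (p : BB A × BB A).2 = none := by
    rintro p
    rw [← Option.not_isSome_iff_eq_none]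
    intro hs'
    obtain ⟨v, hv⟩ := Option.isSome_iff_exists.1 hs'
    rcases supF_cases hv with ⟨γ, hγ, hg⟩ | hb
    · exact hminimal p γ (by simp only [hSp, Set.mem_setOf_eq, hg]; rfl) hγ
    · obtain ⟨a, b, ha, hb', _⟩ := block_some_iff.1 hb
      exact absurd ⟨⟨a, ha⟩, ⟨b, hb'⟩⟩ p.2.2
  have hcell : ∀ p : extraSet (supF A α), ∀ q : BB A × BB A,
      (F A (m p) q.1 q.2).isSome → supF A (m p) q.1 q.2 = none → q = (p : BB A × BB A) := by
    intro p q hq hq'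
    obtain ⟨c, hc⟩ := step_new (supF A (m p)) (task A (m p))
    have hFm : F A (m p) = step (supF A (m p)) (task A (m p)) := F_eq _
    have key2 : ∀ r : BB A × BB A, (F A (m p) r.1 r.2).isSome →
        supF A (m p) r.1 r.2 = none → r = c := by
      intro r h1 h2
      by_contra h
      have h3 := hc r.1 r.2 (by simp only [Prod.mk.eta]; exact h)
      rw [hFm, h3, h2] at h1
      simp at h1
    rw [key2 q hq hq', key2 (p : BB A × BB A) (hmem p) (hnone p)]
  have hinj : Function.Injective (fun p : extraSet (supF A α) => (⟨m p, hlt p⟩ : Iio α)) := by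
    intro p q hpq
    replace hpq : m p = m q := congrArg Subtype.val hpq
    have h2 : (F A (m p) (q : BB A × BB A).1 (q : BB A × BB A).2).isSome := by
      rw [hpq]; exact hmem q
    have hn : supF A (m p) (q : BB A × BB A).1 (q : BB A × BB A).2 = none := by
      rw [hpq]; exact hnone q
    exact Subtype.ext (hcell p (q : BB A × BB A) h2 hn).symm
  calc #(extraSet (supF A α)) ≤ #(Iio α) := mk_le_of_injective hinj
    _ < kap A := Cardinal.mk_Iio_ord_toType α

variable (A) in
/-- The completed (total) square. -/
def Pfin : Sq A := fun x y => if h : ∃ β, (F A β x y).isSome then F A h.choose x y else none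

include hl hr in
lemma Pfin_of {β : D A} {x y v : BB A} (hβ : F A β x y = some v) : Pfin A x y = some v := by
  have hc : ∃ β', (F A β' x y).isSome := ⟨β, by rw [hβ]; rfl⟩
  rw [Pfin, dif_pos hc]
  obtain ⟨w, hw⟩ := Option.isSome_iff_exists.1 hc.choose_spec
  rw [hw]
  rcases le_total hc.choose β with h | h
  · have := F_mono hl hr h _ _ _ hw
    rw [hβ] at this
    exact congrArg some (Option.some_injective _ this).symm
  · have := F_mono hl hr h _ _ _ hβ
    rw [hw] at this
    exact this

omit hl hr in
lemma Pfin_cases {x y v : BB A} (h : Pfin A x y = some v) : ∃ β, F A β x y = some v := by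
  rw [Pfin] at h
  split_ifs at h with hc
  exact ⟨hc.choose, h⟩

include hl hr in
lemma Pfin_total (x y : BB A) : ∃ v, Pfin A x y = some v := by
  set α := tEmb A (Sum.inl (x, y)) with hα
  have hF : F A α = step (supF A α) (some (Sum.inl (x, y))) := by rw [F_eq, hα, task_emb]
  suffices h : ∃ v, F A α x y = some v by
    obtain ⟨v, hv⟩ := h
    exact ⟨v, Pfin_of hl hr hv⟩
  by_cases h1 : (supF A α x y).isSome
  · obtain ⟨v, hv⟩ := Option.isSome_iff_exists.1 h1
    exact ⟨v, by rw [hF]; exact step_le _ _ x y v hv⟩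
  · have h2 := exists_fresh_value (small_supF α) x y
    refine ⟨h2.choose, ?_⟩
    rw [hF]
    simp only [step]
    rw [if_neg h1, dif_pos h2]
    exact fill_self _ _ _ _

include hl hr in
lemma Pfin_row (a b : BB A) : ∃ y, Pfin A a y = some b := by
  set α := tEmb A (Sum.inr (Sum.inl (a, b))) with hα
  have hF : F A α = step (supF A α) (some (Sum.inr (Sum.inl (a, b)))) := by
    rw [F_eq, hα, task_emb]
  by_cases h1 : ∃ y, supF A α a y = some b
  · obtain ⟨y, hy⟩ := h1
    exact ⟨y, Pfin_of hl hr (by rw [hF]; exact step_le _ _ _ _ _ hy)⟩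
  · have h2 : ∃ c, ∀ x, supF A α x c = none := exists_empty_col (small_supF α)
    refine ⟨h2.choose, Pfin_of hl hr (β := α) ?_⟩
    rw [hF]
    simp only [step]
    rw [if_neg h1, dif_pos h2]
    exact fill_self _ _ _ _

include hl hr in
lemma Pfin_col (a b : BB A) : ∃ x, Pfin A x a = some b := by
  set α := tEmb A (Sum.inr (Sum.inr (a, b))) with hα
  have hF : F A α = step (supF A α) (some (Sum.inr (Sum.inr (a, b)))) := by
    rw [F_eq, hα, task_emb]
  by_cases h1 : ∃ x, supF A α x a = some b
  · obtain ⟨x, hx⟩ := h1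
    exact ⟨x, Pfin_of hl hr (by rw [hF]; exact step_le _ _ _ _ _ hx)⟩
  · have h2 : ∃ r, ∀ y, supF A α r y = none := exists_empty_row (small_supF α)
    refine ⟨h2.choose, Pfin_of hl hr (β := α) ?_⟩
    rw [hF]
    simp only [step]
    rw [if_neg h1, dif_pos h2]
    exact fill_self _ _ _ _

include hl hr in
lemma Pfin_rowInj {x y y' v : BB A} (h1 : Pfin A x y = some v) (h2 : Pfin A x y' = some v) :
    y = y' := by
  obtain ⟨β, hβ⟩ := Pfin_cases h1
  obtain ⟨γ, hγ⟩ := Pfin_cases h2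
  rcases le_total β γ with h | h
  · exact (valid_F hl hr γ).rowInj _ _ _ _ (F_mono hl hr h _ _ _ hβ) hγ
  · exact (valid_F hl hr β).rowInj _ _ _ _ hβ (F_mono hl hr h _ _ _ hγ)

include hl hr in
lemma Pfin_colInj {x x' y v : BB A} (h1 : Pfin A x y = some v) (h2 : Pfin A x' y = some v) :
    x = x' := by
  obtain ⟨β, hβ⟩ := Pfin_cases h1
  obtain ⟨γ, hγ⟩ := Pfin_cases h2
  rcases le_total β γ with h | h
  · exact (valid_F hl hr γ).colInj _ _ _ _ (F_mono hl hr h _ _ _ hβ) hγ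
  · exact (valid_F hl hr β).colInj _ _ _ _ hβ (F_mono hl hr h _ _ _ hγ)

include hl hr in
lemma Pfin_base (a b : A) : Pfin A (Sum.inl a) (Sum.inl b) = some (Sum.inl (a * b)) :=
  Pfin_of hl hr ((valid_F hl hr (Classical.arbitrary (D A))).base a b)

end

end QGEmbed

theorem embeds_into_quasigroup_iff_cancellative
    {A : Type u} [Mul A] [Nonempty A] :
    (∃ (B : Type u) (op : B → B → B) (_ : Nonempty B),
        (∀ a b : B, ∃! x : B, op a x = b) ∧
        (∀ a b : B, ∃! y : B, op y a = b) ∧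
        ∃ f : A → B, Function.Injective f ∧ ∀ x y : A, f (x * y) = op (f x) (f y)) ↔
      ((∀ a b c : A, a * b = a * c → b = c) ∧
        (∀ a b c : A, b * a = c * a → b = c)) := by
  constructor
  · rintro ⟨B, op, _, hL, hR, f, hf, hmul⟩
    constructor
    · intro a b c h
      apply hf
      exact (hL (f a) (f (a * b))).unique (hmul a b).symm (by rw [← hmul a c, ← h])
    · intro a b c h
      apply hf
      exact (hR (f a) (f (b * a))).unique (hmul b a).symm (by rw [← hmul c a, ← h])
  · rintro ⟨hl, hr⟩
    classical
    have htot := fun x y => QGEmbed.Pfin_total hl hr x y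
    refine ⟨QGEmbed.BB A, fun x y => (htot x y).choose,
      ⟨Sum.inl (Classical.arbitrary A)⟩, ?_, ?_, Sum.inl, Sum.inl_injective, ?_⟩
    · intro a b
      obtain ⟨y, hy⟩ := QGEmbed.Pfin_row hl hr a b
      refine ⟨y, ?_, ?_⟩
      · show (htot a y).choose = b
        exact Option.some_injective _ ((htot a y).choose_spec.symm.trans hy)
      · intro x' hx'
        have hx'' : (htot a x').choose = b := hx'
        exact QGEmbed.Pfin_rowInj hl hr
          ((htot a x').choose_spec.trans (congrArg some hx'')) hy
    · intro a b
      obtain ⟨x, hx⟩ := QGEmbed.Pfin_col hl hr a b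
      refine ⟨x, ?_, ?_⟩
      · show (htot x a).choose = b
        exact Option.some_injective _ ((htot x a).choose_spec.symm.trans hx)
      · intro y' hy'
        have hy'' : (htot y' a).choose = b := hy'
        exact QGEmbed.Pfin_colInj hl hr
          ((htot y' a).choose_spec.trans (congrArg some hy'')) hx
    · intro x y
      show Sum.inl (x * y) = (htot (Sum.inl x) (Sum.inl y)).choose
      exact Option.some_injective _
        ((QGEmbed.Pfin_base hl hr x y).symm.trans (htot (Sum.inl x) (Sum.inl y)).choose_spec)
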